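/- Let M be a metric space with at least 3 points, s(M) > 0 and e(M) > 0, and let ε be a real number with 0 < ε ≤ s(M)/8 and ε < e(M)/8. Let X and Y be metric spaces admitting correspondences R_X between M and X and R_Y between M and Y with dis R_X < 2ε and dis R_Y < 2ε; put X_i = R_X(i) and Y_i = R_Y(i) for i ∈ M. Then there exists a correspondence R between X and Y with dis R < 4ε, and every correspondence R between X and Y with dis R < 4ε decomposes as R = ⊔_{i∈M} R_i with R_i a correspondence between X_i and Y_i; that is, for all (x,y) ∈ R and all i ∈ M, x ∈ X_i if and only if y ∈ Y_i. -/

import Mathlib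

open ENNReal

/-- A correspondence between `A` and `B`: a relation whose projections are surjective. -/
def IsCorr {A B : Type*} (R : Set (A × B)) : Prop :=
  (∀ a, ∃ b, (a, b) ∈ R) ∧ ∀ b, ∃ a, (a, b) ∈ R

/-- Distortion of a relation between metric spaces, a value in `[0,∞]`. -/
noncomputable def disMS {A B : Type*} [MetricSpace A] [MetricSpace B]
    (σ : Set (A × B)) : ℝ≥0∞ :=
  ⨆ p ∈ σ, ⨆ q ∈ σ, ENNReal.ofReal |dist p.1 q.1 - dist p.2 q.2|

/-- `s(M) = inf{dist(x,x') : x ≠ x'}`. -/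
noncomputable def sSpace (M : Type*) [MetricSpace M] : ℝ :=
  sInf {r : ℝ | ∃ x y : M, x ≠ y ∧ r = dist x y}

/-- `e(M) = inf{dis f : f : M ≃ M, f ≠ id}`, a value in `[0,∞]`. -/
noncomputable def eSpace (M : Type*) [MetricSpace M] : ℝ≥0∞ :=
  ⨅ f ∈ {f : M ≃ M | f ≠ Equiv.refl M},
    ⨆ x : M, ⨆ y : M, ENNReal.ofReal |dist (f x) (f y) - dist x y|

/-- Let `M` be totally discrete and totally asymmetric with at least 3 points,
`0 < ε ≤ s(M)/8`, `ε < e(M)/8`, and let `X`, `Y` admit correspondences with `M` of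
distortion `< 2ε` (defining the canonical partitions `X_i = R_X(i)`, `Y_i = R_Y(i)`).
Then there is a correspondence between `X` and `Y` of distortion `< 4ε`, and every such
correspondence respects the canonical partitions: for `(x,y) ∈ R`, `x ∈ X_i ↔ y ∈ Y_i`. -/
lemma pair_le_disMS {A B : Type*} [MetricSpace A] [MetricSpace B] {σ : Set (A × B)}
    {p q : A × B} (hp : p ∈ σ) (hq : q ∈ σ) :
    ENNReal.ofReal |dist p.1 q.1 - dist p.2 q.2| ≤ disMS σ := by
  unfold disMS
  exact le_iSup₂_of_le p hp (le_iSup₂_of_le q hq le_rfl)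

lemma dis_lt {A B : Type*} [MetricSpace A] [MetricSpace B] {σ : Set (A × B)} {c : ℝ}
    (h : disMS σ < ENNReal.ofReal c) {p q : A × B} (hp : p ∈ σ) (hq : q ∈ σ) :
    |dist p.1 q.1 - dist p.2 q.2| < c :=
  (ENNReal.ofReal_lt_ofReal_iff_of_nonneg (abs_nonneg _)).mp
    (lt_of_le_of_lt (pair_le_disMS hp hq) h)

theorem stmt_7 {M X Y : Type*} [MetricSpace M] [MetricSpace X] [MetricSpace Y]
    (hM : ∃ x y z : M, x ≠ y ∧ x ≠ z ∧ y ≠ z)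
    (hs : 0 < sSpace M) (he : 0 < eSpace M)
    (ε : ℝ) (hε0 : 0 < ε) (hε1 : ε ≤ sSpace M / 8) (hε2 : ENNReal.ofReal ε < eSpace M / 8)
    (RX : Set (M × X)) (hRX : IsCorr RX) (hdX : disMS RX < ENNReal.ofReal (2 * ε))
    (RY : Set (M × Y)) (hRY : IsCorr RY) (hdY : disMS RY < ENNReal.ofReal (2 * ε)) :
    (∃ R : Set (X × Y), IsCorr R ∧ disMS R < ENNReal.ofReal (4 * ε)) ∧
    ∀ R : Set (X × Y), IsCorr R → disMS R < ENNReal.ofReal (4 * ε) →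
      ∀ x y, (x, y) ∈ R → ∀ i : M, ((i, x) ∈ RX ↔ (i, y) ∈ RY) := by
  have sle : ∀ i j : M, i ≠ j → sSpace M ≤ dist i j := fun i j h =>
    csInf_le ⟨0, fun r ⟨x, y, _, hr⟩ => hr ▸ dist_nonneg⟩ ⟨i, j, h, rfl⟩
  -- disjointness of the canonical partitions
  have djX : ∀ {i j : M} {x : X}, (i, x) ∈ RX → (j, x) ∈ RX → i = j := by
    intro i j x hi hj
    by_contra h
    have h1 : |dist i j - dist x x| < 2 * ε := dis_lt hdX hi hj
    rw [dist_self] at h1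
    have h2 := sle i j h
    have := abs_lt.1 h1
    linarith [this.2]
  have djY : ∀ {i j : M} {y : Y}, (i, y) ∈ RY → (j, y) ∈ RY → i = j := by
    intro i j y hi hj
    by_contra h
    have h1 : |dist i j - dist y y| < 2 * ε := dis_lt hdY hi hj
    rw [dist_self] at h1
    have h2 := sle i j h
    have := abs_lt.1 h1
    linarith [this.2]
  constructor
  · -- existence
    refine ⟨{p : X × Y | ∃ i, (i, p.1) ∈ RX ∧ (i, p.2) ∈ RY}, ⟨?_, ?_⟩, ?_⟩
    · intro x
      obtain ⟨i, hi⟩ := hRX.2 x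
      obtain ⟨y, hy⟩ := hRY.1 i
      exact ⟨y, i, hi, hy⟩
    · intro y
      obtain ⟨i, hi⟩ := hRY.2 y
      obtain ⟨x, hx⟩ := hRX.1 i
      exact ⟨x, i, hx, hi⟩
    · have hb : disMS {p : X × Y | ∃ i, (i, p.1) ∈ RX ∧ (i, p.2) ∈ RY}
          ≤ disMS RX + disMS RY := by
        refine iSup₂_le fun p hp => iSup₂_le fun q hq => ?_
        obtain ⟨i, hix, hiy⟩ := hp
        obtain ⟨j, hjx, hjy⟩ := hq
        calc ENNReal.ofReal |dist p.1 q.1 - dist p.2 q.2|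
            ≤ ENNReal.ofReal (|dist i j - dist p.1 q.1| + |dist i j - dist p.2 q.2|) := by
              apply ENNReal.ofReal_le_ofReal
              have := abs_sub_le (dist p.1 q.1) (dist i j) (dist p.2 q.2)
              rw [abs_sub_comm (dist p.1 q.1) (dist i j)] at this
              linarith
          _ = ENNReal.ofReal |dist i j - dist p.1 q.1|
              + ENNReal.ofReal |dist i j - dist p.2 q.2| :=
              ENNReal.ofReal_add (abs_nonneg _) (abs_nonneg _)
          _ ≤ disMS RX + disMS RY :=
              add_le_add (pair_le_disMS hix hjx) (pair_le_disMS hiy hjy)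
      refine lt_of_le_of_lt hb ?_
      have h4 : ENNReal.ofReal (2 * ε) + ENNReal.ofReal (2 * ε) = ENNReal.ofReal (4 * ε) := by
        rw [← ENNReal.ofReal_add (by linarith) (by linarith)]
        ring_nf
      rw [← h4]
      exact ENNReal.add_lt_add hdX hdY
  · -- uniqueness of the decomposition
    intro R hR hdR x0 y0 hxy0 i0
    have transY : ∀ {i : M} {x x' : X} {y y' : Y} {j j' : M},
        (i, x) ∈ RX → (x, y) ∈ R → (i, x') ∈ RX → (x', y') ∈ R →
        (j, y) ∈ RY → (j', y') ∈ RY → j = j' := by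
      intro i x x' y y' j j' hix hxy hix' hx'y' hjy hj'y'
      by_contra h
      have h1 : |dist i i - dist x x'| < 2 * ε := dis_lt hdX hix hix'
      rw [dist_self] at h1
      have h2 : |dist x x' - dist y y'| < 4 * ε := dis_lt hdR hxy hx'y'
      have h3 : |dist j j' - dist y y'| < 2 * ε := dis_lt hdY hjy hj'y'
      have hss := sle j j' h
      have a1 := abs_lt.1 h1
      have a2 := abs_lt.1 h2
      have a3 := abs_lt.1 h3
      linarith [a1.1, a1.2, a2.1, a2.2, a3.1, a3.2]
    have transX : ∀ {j : M} {y y' : Y} {x x' : X} {i i' : M},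
        (j, y) ∈ RY → (x, y) ∈ R → (j, y') ∈ RY → (x', y') ∈ R →
        (i, x) ∈ RX → (i', x') ∈ RX → i = i' := by
      intro j y y' x x' i i' hjy hxy hjy' hx'y' hix hi'x'
      by_contra h
      have h1 : |dist j j - dist y y'| < 2 * ε := dis_lt hdY hjy hjy'
      rw [dist_self] at h1
      have h2 : |dist x x' - dist y y'| < 4 * ε := dis_lt hdR hxy hx'y'
      have h3 : |dist i i' - dist x x'| < 2 * ε := dis_lt hdX hix hi'x'
      have hss := sle i i' h
      have a1 := abs_lt.1 h1
      have a2 := abs_lt.1 h2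
      have a3 := abs_lt.1 h3
      linarith [a1.1, a1.2, a2.1, a2.2, a3.1, a3.2]
    have fex : ∀ i : M, ∃ j, ∀ x y, (i, x) ∈ RX → (x, y) ∈ R → (j, y) ∈ RY := by
      intro i
      obtain ⟨x, hx⟩ := hRX.1 i
      obtain ⟨y, hy⟩ := hR.1 x
      obtain ⟨j, hj⟩ := hRY.2 y
      refine ⟨j, fun x' y' hx' hy' => ?_⟩
      obtain ⟨j', hj'⟩ := hRY.2 y'
      have : j' = j := transY hx' hy' hx hy hj' hj
      exact this ▸ hj'
    have gex : ∀ j : M, ∃ i, ∀ y x, (j, y) ∈ RY → (x, y) ∈ R → (i, x) ∈ RX := by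
      intro j
      obtain ⟨y, hy⟩ := hRY.1 j
      obtain ⟨x, hx⟩ := hR.2 y
      obtain ⟨i, hi⟩ := hRX.2 x
      refine ⟨i, fun y' x' hy' hx' => ?_⟩
      obtain ⟨i', hi'⟩ := hRX.2 x'
      have : i' = i := transX hy' hx' hy hx hi' hi
      exact this ▸ hi'
    set f : M → M := fun i => (fex i).choose with hfdef
    have hf : ∀ i x y, (i, x) ∈ RX → (x, y) ∈ R → (f i, y) ∈ RY :=
      fun i => (fex i).choose_spec
    set g : M → M := fun j => (gex j).choose with hgdef
    have hg : ∀ j y x, (j, y) ∈ RY → (x, y) ∈ R → (g j, x) ∈ RX :=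
      fun j => (gex j).choose_spec
    have hli : ∀ i, g (f i) = i := by
      intro i
      obtain ⟨x, hx⟩ := hRX.1 i
      obtain ⟨y, hy⟩ := hR.1 x
      have h1 : (f i, y) ∈ RY := hf i x y hx hy
      have h2 : (g (f i), x) ∈ RX := hg (f i) y x h1 hy
      exact djX h2 hx
    have hri : ∀ j, f (g j) = j := by
      intro j
      obtain ⟨y, hy⟩ := hRY.1 j
      obtain ⟨x, hx⟩ := hR.2 y
      have h2 : (g j, x) ∈ RX := hg j y x hy hx
      have h1 : (f (g j), y) ∈ RY := hf (g j) x y h2 hx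
      exact djY h1 hy
    set F : M ≃ M := ⟨f, g, hli, hri⟩ with hFdef
    have hFid : F = Equiv.refl M := by
      by_contra hne
      have hle : eSpace M ≤ ⨆ x : M, ⨆ y : M,
          ENNReal.ofReal |dist (F x) (F y) - dist x y| := by
        unfold eSpace
        exact iInf₂_le F hne
      have hsup : (⨆ x : M, ⨆ y : M, ENNReal.ofReal |dist (F x) (F y) - dist x y|)
          ≤ ENNReal.ofReal (8 * ε) := by
        refine iSup_le fun a => iSup_le fun b => ?_
        obtain ⟨xa, hxa⟩ := hRX.1 a
        obtain ⟨ya, hya⟩ := hR.1 xa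
        have hja : (f a, ya) ∈ RY := hf a xa ya hxa hya
        obtain ⟨xb, hxb⟩ := hRX.1 b
        obtain ⟨yb, hyb⟩ := hR.1 xb
        have hjb : (f b, yb) ∈ RY := hf b xb yb hxb hyb
        have h1 : |dist a b - dist xa xb| < 2 * ε := dis_lt hdX hxa hxb
        have h2 : |dist xa xb - dist ya yb| < 4 * ε := dis_lt hdR hya hyb
        have h3 : |dist (f a) (f b) - dist ya yb| < 2 * ε := dis_lt hdY hja hjb
        apply ENNReal.ofReal_le_ofReal
        have hFab : dist (F a) (F b) = dist (f a) (f b) := rfl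
        rw [hFab]
        have a1 := abs_lt.1 h1
        have a2 := abs_lt.1 h2
        have a3 := abs_lt.1 h3
        rw [abs_le]
        constructor <;> [linarith [a1.1, a2.1, a3.1, a1.2, a2.2, a3.2];
          linarith [a1.1, a2.1, a3.1, a1.2, a2.2, a3.2]]
      have h8 : ENNReal.ofReal (8 * ε) = 8 * ENNReal.ofReal ε := by
        rw [ENNReal.ofReal_mul (by norm_num)]
        norm_num
      have hlt : eSpace M ≤ 8 * ENNReal.ofReal ε := h8 ▸ hle.trans hsup
      have hlt2 : 8 * ENNReal.ofReal ε < 8 * (eSpace M / 8) :=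
        (ENNReal.mul_lt_mul_iff_right (by norm_num) (by norm_num)).2 hε2
      have hlt3 : 8 * (eSpace M / 8) ≤ eSpace M := ENNReal.mul_div_le
      exact absurd (hlt.trans_lt (hlt2.trans_le hlt3)) (lt_irrefl _)
    have hfi : ∀ i, f i = i := by
      intro i
      have : F i = Equiv.refl M i := by rw [hFid]
      exact this
    have hgi : ∀ j, g j = j := by
      intro j
      have := hli j
      rwa [hfi j] at this
    constructor
    · intro hix
      have := hf i0 x0 y0 hix hxy0
      rwa [hfi i0] at this
    · intro hiy
      have := hg i0 y0 x0 hiy hxy0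
      rwa [hgi i0] at this
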